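/- Let ξ(x) = Σ_{p≥2} c_p² x^p with nonnegative coefficients, ξ(1)=1, ξ ≠ x², and define h(q) = (1/2)(1−q)(ξ'(1)−ξ'(q)) + ξ'(q)(1−q) − 1 + ξ(q). Then h(q) > 0 for all q ∈ (0,1). -/

import Mathlib

lemma pair_le {q : ℝ} (hq0 : 0 ≤ q) (hq1 : q ≤ 1) {k n : ℕ} (hk : k ≤ n) :
    q ^ k + q ^ (n - k) ≤ 1 + q ^ n := by
  have h1 : q ^ k ≤ 1 := pow_le_one₀ hq0 hq1
  have h2 : q ^ (n - k) ≤ 1 := pow_le_one₀ hq0 hq1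
  have h3 : q ^ k * q ^ (n - k) = q ^ n := by
    rw [← pow_add, Nat.add_sub_cancel' hk]
  nlinarith

lemma pair_lt {q : ℝ} (hq0 : 0 ≤ q) (hq1 : q < 1) {k n : ℕ} (hk1 : 1 ≤ k)
    (hk : k + 1 ≤ n) : q ^ k + q ^ (n - k) < 1 + q ^ n := by
  have h1 : q ^ k < 1 := pow_lt_one₀ hq0 hq1 (by omega)
  have h2 : q ^ (n - k) < 1 := pow_lt_one₀ hq0 hq1 (by omega)
  have h3 : q ^ k * q ^ (n - k) = q ^ n := by
    rw [← pow_add, Nat.add_sub_cancel' (by omega)]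
  nlinarith

lemma sum_le {q : ℝ} (hq0 : 0 ≤ q) (hq1 : q ≤ 1) (n : ℕ) :
    2 * ∑ k ∈ Finset.range (n + 1), q ^ k ≤ ((n : ℝ) + 1) * (1 + q ^ n) := by
  have hrefl : ∑ k ∈ Finset.range (n + 1), q ^ (n - k)
      = ∑ k ∈ Finset.range (n + 1), q ^ k := by
    have := Finset.sum_range_reflect (fun k => q ^ k) (n + 1)
    simpa using this
  have : ∑ k ∈ Finset.range (n + 1), (q ^ k + q ^ (n - k))
      ≤ ∑ _k ∈ Finset.range (n + 1), (1 + q ^ n) := by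
    refine Finset.sum_le_sum fun k hk => ?_
    exact pair_le hq0 hq1 (by simpa [Nat.lt_succ_iff] using Finset.mem_range.mp hk)
  simp only [Finset.sum_add_distrib, hrefl, Finset.sum_const, Finset.card_range,
    nsmul_eq_mul] at this
  push_cast at this ⊢
  linarith

lemma sum_lt {q : ℝ} (hq0 : 0 < q) (hq1 : q < 1) {n : ℕ} (hn : 2 ≤ n) :
    2 * ∑ k ∈ Finset.range (n + 1), q ^ k < ((n : ℝ) + 1) * (1 + q ^ n) := by
  have hrefl : ∑ k ∈ Finset.range (n + 1), q ^ (n - k)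
      = ∑ k ∈ Finset.range (n + 1), q ^ k := by
    have := Finset.sum_range_reflect (fun k => q ^ k) (n + 1)
    simpa using this
  have : ∑ k ∈ Finset.range (n + 1), (q ^ k + q ^ (n - k))
      < ∑ _k ∈ Finset.range (n + 1), (1 + q ^ n) := by
    refine Finset.sum_lt_sum (fun k hk => pair_le hq0.le hq1.le
      (by simpa [Nat.lt_succ_iff] using Finset.mem_range.mp hk)) ?_
    exact ⟨1, Finset.mem_range.mpr (by omega), pair_lt hq0.le hq1 le_rfl (by omega)⟩
  simp only [Finset.sum_add_distrib, hrefl, Finset.sum_const, Finset.card_range,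
    nsmul_eq_mul] at this
  push_cast at this ⊢
  linarith

lemma term_factor (q : ℝ) (n : ℕ) :
    (1/2) * (1 - q) * (((n : ℝ) + 1) - ((n : ℝ) + 1) * q ^ n)
      + ((n : ℝ) + 1) * q ^ n * (1 - q) + q ^ (n + 1) - 1
    = (1 - q) * (((n : ℝ) + 1) / 2 * (1 + q ^ n)
      - ∑ k ∈ Finset.range (n + 1), q ^ k) := by
  have key : (1 : ℝ) - q ^ (n + 1)
      = (1 - q) * ∑ k ∈ Finset.range (n + 1), q ^ k := by
    linear_combination geom_sum_mul q (n + 1)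
  linear_combination -key

lemma term_nonneg {q : ℝ} (hq0 : 0 < q) (hq1 : q < 1) (n : ℕ) :
    0 ≤ (1/2) * (1 - q) * (((n : ℝ) + 1) - ((n : ℝ) + 1) * q ^ n)
      + ((n : ℝ) + 1) * q ^ n * (1 - q) + q ^ (n + 1) - 1 := by
  rw [term_factor]
  have h := sum_le hq0.le hq1.le n
  have h1 : (0:ℝ) ≤ 1 - q := by linarith
  nlinarith

lemma term_pos {q : ℝ} (hq0 : 0 < q) (hq1 : q < 1) {n : ℕ} (hn : 2 ≤ n) :
    0 < (1/2) * (1 - q) * (((n : ℝ) + 1) - ((n : ℝ) + 1) * q ^ n)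
      + ((n : ℝ) + 1) * q ^ n * (1 - q) + q ^ (n + 1) - 1 := by
  rw [term_factor]
  have h := sum_lt hq0 hq1 hn
  have h1 : (0:ℝ) < 1 - q := by linarith
  nlinarith

/-- For `ξ(x) = ∑_{p≥2} c_p x^p` with nonnegative coefficients, `ξ(1)=1`, `ξ ≠ x²`,
the function `h(q) = ½(1−q)(ξ'(1)−ξ'(q)) + ξ'(q)(1−q) − 1 + ξ(q)` is positive on `(0,1)`. -/
theorem h_pos_on_Ioo
    (c : ℕ → ℝ) (hc : ∀ p, 0 ≤ c p) (hc0 : c 0 = 0) (hc1 : c 1 = 0)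
    (hsum : Summable (fun p : ℕ => (2 : ℝ) ^ p * c p))
    (hnorm : (∑' p : ℕ, c p) = 1)
    (hne : ∃ p : ℕ, 3 ≤ p ∧ 0 < c p)
    (xi xi' : ℝ → ℝ)
    (hxi : ∀ x : ℝ, xi x = ∑' p : ℕ, c p * x ^ p)
    (hxi' : ∀ x : ℝ, xi' x = ∑' p : ℕ, (p : ℝ) * c p * x ^ (p - 1)) :
    ∀ q : ℝ, 0 < q → q < 1 →
      0 < (1 / 2) * (1 - q) * (xi' 1 - xi' q) + xi' q * (1 - q) - 1 + xi q := by
  intro q hq0 hq1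
  have hq1' : q ≤ 1 := hq1.le
  -- summability facts
  have hD : Summable c := by
    refine hsum.of_nonneg_of_le hc fun p => ?_
    exact le_mul_of_one_le_left (hc p) (one_le_pow₀ (by norm_num))
  have hA : Summable (fun p : ℕ => (p : ℝ) * c p) := by
    refine hsum.of_nonneg_of_le (fun p => mul_nonneg (by positivity) (hc p)) fun p => ?_
    have : (p : ℝ) ≤ 2 ^ p := by
      exact_mod_cast (Nat.lt_two_pow_self (n := p)).le
    exact mul_le_mul_of_nonneg_right this (hc p)
  have hB : Summable (fun p : ℕ => (p : ℝ) * c p * q ^ (p - 1)) := by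
    refine hA.of_nonneg_of_le
      (fun p => mul_nonneg (mul_nonneg (by positivity) (hc p)) (by positivity)) fun p => ?_
    have hqp : q ^ (p - 1) ≤ 1 := pow_le_one₀ hq0.le hq1'
    nlinarith [mul_nonneg (Nat.cast_nonneg (α := ℝ) p) (hc p)]
  have hC : Summable (fun p : ℕ => c p * q ^ p) := by
    refine hD.of_nonneg_of_le (fun p => mul_nonneg (hc p) (by positivity)) fun p => ?_
    have hqp : q ^ p ≤ 1 := pow_le_one₀ hq0.le hq1'
    nlinarith [hc p]
  -- expressions for xi, xi'
  have hxi1 : xi' 1 = ∑' p : ℕ, (p : ℝ) * c p := by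
    rw [hxi' 1]; exact tsum_congr fun p => by rw [one_pow, mul_one]
  -- the combined series
  set f : ℕ → ℝ := fun p =>
    (1 / 2) * (1 - q) * ((p : ℝ) * c p - (p : ℝ) * c p * q ^ (p - 1))
      + (p : ℝ) * c p * q ^ (p - 1) * (1 - q) + (c p * q ^ p - c p) with hf
  have Hsum : HasSum f
      ((1 / 2) * (1 - q) * ((∑' p : ℕ, (p : ℝ) * c p) - ∑' p : ℕ, (p : ℝ) * c p * q ^ (p - 1))
        + (∑' p : ℕ, (p : ℝ) * c p * q ^ (p - 1)) * (1 - q)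
        + ((∑' p : ℕ, c p * q ^ p) - ∑' p : ℕ, c p)) :=
    (((hA.hasSum.sub hB.hasSum).mul_left _).add (hB.hasSum.mul_right _)).add
      (hC.hasSum.sub hD.hasSum)
  have hfnonneg : ∀ p, 0 ≤ f p := by
    intro p
    match p, hf with
    | 0, hf => simp [hf, hc0]
    | 1, hf => simp [hf, hc1]
    | (m + 2), hf =>
      have ht := term_nonneg hq0 hq1 (m + 1)
      have hcp := hc (m + 2)
      have heq : f (m + 2) = c (m + 2) *
          ((1/2) * (1 - q) * (((m + 1 : ℕ) : ℝ) + 1 - (((m + 1 : ℕ) : ℝ) + 1) * q ^ (m + 1))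
            + (((m + 1 : ℕ) : ℝ) + 1) * q ^ (m + 1) * (1 - q) + q ^ (m + 1 + 1) - 1) := by
        simp only [hf]
        push_cast
        ring_nf
      rw [heq]
      exact mul_nonneg hcp (by push_cast at ht ⊢; linarith)
  obtain ⟨p₀, hp₀3, hp₀c⟩ := hne
  have hfpos : 0 < f p₀ := by
    obtain ⟨m, rfl⟩ : ∃ m, p₀ = m + 3 := ⟨p₀ - 3, by omega⟩
    have ht := term_pos hq0 hq1 (n := m + 2) (by omega)
    have heq : f (m + 3) = c (m + 3) *
        ((1/2) * (1 - q) * (((m + 2 : ℕ) : ℝ) + 1 - (((m + 2 : ℕ) : ℝ) + 1) * q ^ (m + 2))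
          + (((m + 2 : ℕ) : ℝ) + 1) * q ^ (m + 2) * (1 - q) + q ^ (m + 2 + 1) - 1) := by
      simp only [hf]
      push_cast
      ring_nf
    rw [heq]
    exact mul_pos hp₀c (by push_cast at ht ⊢; linarith)
  have hpos : 0 < ∑' p, f p := Summable.tsum_pos Hsum.summable hfnonneg p₀ hfpos
  rw [Hsum.tsum_eq] at hpos
  rw [hxi q, hxi' q, hxi1, hnorm] at *
  linarith
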